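/- The number of cyclic subgroups of order exactly ℓ^m of the group (ZMod ℓ^m)⁴ is exactly ℓ^{3m} + ℓ^{3m−1} + ℓ^{3m−2} + ℓ^{3m−3}. -/

import Mathlib

open Finset

section Aux

variable {α : Type*} [AddCommGroup α] [Fintype α] [DecidableEq α]

/-- In a finite cyclic group, the number of `d`-torsion elements is `d` for `d ∣ card`. -/
lemma aux_card_nsmul_eq_zero [IsAddCyclic α] {d : ℕ} (hd : d ∣ Fintype.card α)
    (hd0 : d ≠ 0) : (Finset.univ.filter fun a : α => d • a = 0).card = d := by
  rw [← sum_card_addOrderOf_eq_card_nsmul_eq_zero (G := α) hd0]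
  conv_rhs => rw [← Nat.sum_totient d]
  apply Finset.sum_congr rfl
  intro e he
  exact IsAddCyclic.card_addOrderOf_eq_totient ((Nat.dvd_of_mem_divisors he).trans hd)

/-- A `zmultiples` subgroup is cyclic. -/
instance aux_isAddCyclic_zmultiples {G : Type*} [AddGroup G] (g : G) :
    IsAddCyclic (AddSubgroup.zmultiples g) := by
  refine ⟨⟨g, AddSubgroup.mem_zmultiples g⟩, fun y => ?_⟩
  obtain ⟨k, hk⟩ := y.2
  exact ⟨k, Subtype.ext (by simpa using hk)⟩

end Aux

/-- The number of cyclic subgroups of order exactly `ℓ^m` of the group `(ZMod ℓ^m)⁴`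
(i.e. subgroups generated by a single element of additive order exactly `ℓ^m`) is exactly
`ℓ^{3m} + ℓ^{3m−1} + ℓ^{3m−2} + ℓ^{3m−3}`. -/
theorem stmt_1 (ℓ m : ℕ) (hℓ : ℓ.Prime) (hm : 1 ≤ m) :
    Nat.card {H : AddSubgroup (Fin 4 → ZMod (ℓ ^ m)) //
        ∃ x : Fin 4 → ZMod (ℓ ^ m), addOrderOf x = ℓ ^ m ∧ H = AddSubgroup.zmultiples x} =
      ℓ ^ (3 * m) + ℓ ^ (3 * m - 1) + ℓ ^ (3 * m - 2) + ℓ ^ (3 * m - 3) := by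
  classical
  obtain ⟨k, rfl⟩ : ∃ k, m = k + 1 := ⟨m - 1, (Nat.succ_pred_eq_of_pos hm).symm⟩
  set n : ℕ := ℓ ^ (k + 1) with hn
  have hℓ0 : ℓ ≠ 0 := hℓ.pos.ne'
  have hℓ1 : 1 < ℓ := hℓ.one_lt
  have hn0 : n ≠ 0 := pow_ne_zero _ hℓ0
  haveI : NeZero n := ⟨hn0⟩
  set G := Fin 4 → ZMod n with hG
  -- every element is `n`-torsion
  have htors : ∀ x : G, n • x = 0 := by
    intro x
    funext i
    simp [Pi.smul_apply, nsmul_eq_mul, ZMod.natCast_self]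
  have horddvd : ∀ x : G, addOrderOf x ∣ n := fun x =>
    addOrderOf_dvd_of_nsmul_eq_zero (htors x)
  -- characterize non-maximal order
  have hiff : ∀ x : G, ¬(addOrderOf x = n) ↔ (ℓ ^ k) • x = 0 := by
    intro x
    constructor
    · intro h
      obtain ⟨j, hj, hx⟩ := (Nat.dvd_prime_pow hℓ).mp (horddvd x)
      have hj' : j ≤ k := by
        by_contra hc
        have hjk : j = k + 1 := by omega
        exact h (by rw [hx, hjk])
      have hdvd : addOrderOf x ∣ ℓ ^ k := hx ▸ pow_dvd_pow ℓ hj'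
      exact addOrderOf_dvd_iff_nsmul_eq_zero.mp hdvd
    · intro h hord
      have : addOrderOf x ∣ ℓ ^ k := addOrderOf_dvd_of_nsmul_eq_zero h
      have hle : addOrderOf x ≤ ℓ ^ k := Nat.le_of_dvd (by positivity) this
      have : n ≤ ℓ ^ k := hord ▸ hle
      have : ℓ ^ k < ℓ ^ (k + 1) := pow_lt_pow_right₀ hℓ1 (by omega)
      omega
  -- count elements of order exactly n
  have hcardtors : Fintype.card {a : ZMod n // (ℓ ^ k) • a = 0} = ℓ ^ k := by
    rw [Fintype.card_subtype]
    exact aux_card_nsmul_eq_zero (by rw [ZMod.card]; exact pow_dvd_pow ℓ (by omega))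
      (pow_ne_zero _ hℓ0)
  have hcardtorsG : Fintype.card {x : G // (ℓ ^ k) • x = 0} = ℓ ^ (4 * k) := by
    have e : {x : G // (ℓ ^ k) • x = 0} ≃ (Fin 4 → {a : ZMod n // (ℓ ^ k) • a = 0}) :=
      { toFun := fun x i => ⟨x.1 i, congrFun x.2 i⟩
        invFun := fun f => ⟨fun i => (f i).1, funext fun i => (f i).2⟩
        left_inv := fun x => Subtype.ext rfl
        right_inv := fun f => rfl }
    rw [Fintype.card_congr e, Fintype.card_fun, hcardtors, Fintype.card_fin]
    ring
  have hcardS : Fintype.card {x : G // addOrderOf x = n} = ℓ ^ (4 * (k + 1)) - ℓ ^ (4 * k) := by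
    have h1 : Fintype.card {x : G // ¬(addOrderOf x = n)} = ℓ ^ (4 * k) := by
      rw [Fintype.card_congr (Equiv.subtypeEquivRight hiff), hcardtorsG]
    have h2 := Fintype.card_subtype_compl (fun x : G => addOrderOf x = n)
    have hcardG : Fintype.card G = ℓ ^ (4 * (k + 1)) := by
      show Fintype.card (Fin 4 → ZMod n) = _
      rw [Fintype.card_fun, ZMod.card, Fintype.card_fin]
      ring
    have h3 : Fintype.card {x : G // addOrderOf x = n} ≤ Fintype.card G :=
      Fintype.card_subtype_le _
    simp only [← Nat.card_eq_fintype_card] at h1 h2 h3 hcardG ⊢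
    omega
  -- the subgroup-counting part
  set T := {H : AddSubgroup G //
      ∃ x : G, addOrderOf x = n ∧ H = AddSubgroup.zmultiples x} with hT
  -- each H in T has card n
  have hcardH : ∀ H : T, Nat.card H.1 = n := by
    rintro ⟨H, x, hx, rfl⟩
    exact (Nat.card_zmultiples x).trans hx
  -- the fiber map
  let π : {x : G // addOrderOf x = n} → T := fun x => ⟨AddSubgroup.zmultiples x.1, x.1, x.2, rfl⟩
  -- compute fiber cardinality
  have hfiber : ∀ H : T, Nat.card {x : {x : G // addOrderOf x = n} // π x = H} = Nat.totient n := by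
    intro H
    have e : {x : {x : G // addOrderOf x = n} // π x = H} ≃
        {y : H.1 // addOrderOf (y : G) = n} :=
      { toFun := fun x => ⟨⟨x.1.1, by
          have : AddSubgroup.zmultiples x.1.1 = H.1 := congrArg Subtype.val x.2
          rw [← this]; exact AddSubgroup.mem_zmultiples _⟩, x.1.2⟩
        invFun := fun y => ⟨⟨y.1.1, y.2⟩, by
          apply Subtype.ext
          show AddSubgroup.zmultiples (y.1 : G) = H.1
          refine AddSubgroup.eq_of_le_of_card_ge
            ((AddSubgroup.zmultiples_le).mpr y.1.2) ?_
          rw [hcardH H, Nat.card_zmultiples, y.2]⟩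
        left_inv := fun x => Subtype.ext (Subtype.ext rfl)
        right_inv := fun y => Subtype.ext (Subtype.ext rfl) }
    rw [Nat.card_congr e]
    have : ∀ y : H.1, addOrderOf (y : G) = addOrderOf y := fun y =>
      AddSubgroup.addOrderOf_coe y
    rw [Nat.card_congr (Equiv.subtypeEquivRight (fun y => by rw [this y]))]
    have hHcyc : IsAddCyclic H.1 := by
      obtain ⟨H', x, hx, rfl⟩ := H
      infer_instance
    have hHcard : Fintype.card H.1 = n := by
      rw [← Nat.card_eq_fintype_card]; exact hcardH H
    rw [Nat.card_eq_fintype_card, Fintype.card_subtype]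
    exact IsAddCyclic.card_addOrderOf_eq_totient (by rw [hHcard])
  -- sum over the fibers
  have hfin : Finite T := by
    have : Finite (AddSubgroup G) := inferInstance
    exact Subtype.finite
  have hsum : Fintype.card {x : G // addOrderOf x = n} = Nat.card T * Nat.totient n := by
    have := Fintype.ofFinite T
    rw [← Nat.card_eq_fintype_card, Nat.card_congr (Equiv.sigmaFiberEquiv π).symm,
      Nat.card_eq_fintype_card, Fintype.card_sigma]
    rw [Nat.card_eq_fintype_card, Finset.sum_congr rfl (fun H _ => by
      rw [← Nat.card_eq_fintype_card, hfiber H])]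
    rw [Finset.sum_const, Finset.card_univ, smul_eq_mul]
  -- arithmetic conclusion
  have htot : Nat.totient n = ℓ ^ k * (ℓ - 1) := by
    rw [hn, Nat.totient_prime_pow hℓ (by omega)]
    simp
  have key : Nat.card T * Nat.totient n =
      (ℓ ^ (3 * (k + 1)) + ℓ ^ (3 * (k + 1) - 1) + ℓ ^ (3 * (k + 1) - 2) +
        ℓ ^ (3 * (k + 1) - 3)) * Nat.totient n := by
    rw [← hsum, hcardS, htot]
    have e1 : 3 * (k + 1) = 3 * k + 3 := by ring
    have e2 : 3 * (k + 1) - 1 = 3 * k + 2 := by omega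
    have e3 : 3 * (k + 1) - 2 = 3 * k + 1 := by omega
    have e4 : 3 * (k + 1) - 3 = 3 * k := by omega
    have e5 : 4 * (k + 1) = 4 * k + 4 := by ring
    rw [e2, e3, e4, e1, e5]
    have h1 : ℓ ^ (4 * k) ≤ ℓ ^ (4 * k + 4) := Nat.pow_le_pow_right hℓ.pos (by omega)
    have h2 : 1 ≤ ℓ := hℓ.one_le
    zify [h1, h2]
    ring
  have htotpos : 0 < Nat.totient n := Nat.totient_pos.mpr (Nat.pos_of_ne_zero hn0)
  exact Nat.eq_of_mul_eq_mul_right htotpos key
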